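/- Any class of finite digraphs for which there is a uniform bound N on the size of sets of pairwise disjoint edges is well quasi-ordered under the surjective homomorphism ordering (and under the surjective strong homomorphism ordering). -/

import Mathlib

/-- A finite structure with a single binary relation (digraph/graph model). -/
structure FinBinRel where
  n : ℕ
  rel : Fin n → Fin n → Prop

/-- `f` is a homomorphism from `A` to `B`: it maps related pairs to related pairs. -/
def IsHom (A B : FinBinRel) (f : Fin A.n → Fin B.n) : Prop :=
  ∀ x y, A.rel x y → B.rel (f x) (f y)

/-- `f` is a strong homomorphism: a homomorphism such that every related pair of
elements of the image is the image of a related pair. -/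
def IsStrongHom (A B : FinBinRel) (f : Fin A.n → Fin B.n) : Prop :=
  IsHom A B f ∧
    ∀ p q : Fin B.n, B.rel p q → (∃ a, f a = p) → (∃ b, f b = q) →
      ∃ u v, A.rel u v ∧ f u = p ∧ f v = q

/-- Homomorphic image ordering: `A ⪯ B` iff there is a surjective homomorphism `B → A`. -/
def HomLe (A B : FinBinRel) : Prop :=
  ∃ f : Fin B.n → Fin A.n, Function.Surjective f ∧ IsHom B A f

/-- Strong homomorphic image ordering: `A ⪯ B` iff there is a surjective strong
homomorphism `B → A`. -/
def StrongLe (A B : FinBinRel) : Prop :=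
  ∃ f : Fin B.n → Fin A.n, Function.Surjective f ∧ IsStrongHom B A f

/-- Isomorphism of binary relational structures. -/
def BinIso (A B : FinBinRel) : Prop :=
  ∃ e : Fin A.n ≃ Fin B.n, ∀ x y, A.rel x y ↔ B.rel (e x) (e y)

/-- A class `C` is well quasi-ordered by `r`: every infinite sequence of members of `C`
contains a "good pair". (For orderings on finite structures respecting size this is
equivalent to having no infinite antichain.) -/
def IsWqo (r : FinBinRel → FinBinRel → Prop) (C : Set FinBinRel) : Prop :=
  ∀ f : ℕ → FinBinRel, (∀ i, f i ∈ C) → ∃ i j, i < j ∧ r (f i) (f j)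

/-- A reflexive graph: symmetric relation with a loop at every vertex. -/
def ReflGraph (A : FinBinRel) : Prop :=
  (∀ x, A.rel x x) ∧ (∀ x y, A.rel x y → A.rel y x)

/-- An irreflexive graph: symmetric and loopless. -/
def IrrGraph (A : FinBinRel) : Prop :=
  (∀ x, ¬ A.rel x x) ∧ (∀ x y, A.rel x y → A.rel y x)

/-- The irreflexive complete graph on `n` vertices. -/
def Kirr (n : ℕ) : FinBinRel := ⟨n, fun i j => i ≠ j⟩

/-- The complete reflexive graph/digraph on `n` vertices (all pairs, including loops). -/
def Kcompl (n : ℕ) : FinBinRel := ⟨n, fun _ _ => True⟩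

/-- The subcomplete reflexive graph `N_{n,k}` (for `2k ≤ n`): the complete reflexive
graph on `n` vertices with the `k` disjoint edges `{0,1},{2,3},…,{2k-2,2k-1}` deleted. -/
def Ngraph (n k : ℕ) : FinBinRel :=
  ⟨n, fun i j => ¬ ∃ m, m < k ∧
      ((i.val = 2 * m ∧ j.val = 2 * m + 1) ∨ (j.val = 2 * m ∧ i.val = 2 * m + 1))⟩

/-- The subcomplete digraph `N⃗_{n,k}` (for `2k ≤ n`): the complete reflexive digraph
on `n` vertices with the `k` disjoint directed edges `(0,1),(2,3),…,(2k-2,2k-1)` removed. -/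
def Ndigraph (n k : ℕ) : FinBinRel :=
  ⟨n, fun i j => ¬ ∃ m, m < k ∧ i.val = 2 * m ∧ j.val = 2 * m + 1⟩

/-- `D` has a set of `k` pairwise disjoint edges (all `2k` endpoints distinct). -/
def HasDisjointEdges (D : FinBinRel) (k : ℕ) : Prop :=
  ∃ a b : Fin k → Fin D.n,
    Function.Injective (Sum.elim a b) ∧ ∀ i, D.rel (a i) (b i)

open Classical in
noncomputable def db (p : Prop) : Bool := decide p

open Classical in
lemma db_iff {p q : Prop} : db p = db q ↔ (p ↔ q) := by
  simp [db, decide_eq_decide]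

noncomputable def tauF (M : ℕ) (D : FinBinRel) (σ : Fin M → Fin D.n) (v : Fin D.n) :
    (Fin M → Bool × Bool) × Bool :=
  (fun a => (db (D.rel v (σ a)), db (D.rel (σ a) v)), db (D.rel v v))

noncomputable def cnt (M : ℕ) (D : FinBinRel) (σ : Fin M → Fin D.n)
    (t : (Fin M → Bool × Bool) × Bool) : ℕ :=
  Nat.card {v : Fin D.n // (¬ ∃ a, σ a = v) ∧ tauF M D σ v = t}

lemma tau_eq_props {M : ℕ} {D1 D2 : FinBinRel} {σ1 : Fin M → Fin D1.n}
    {σ2 : Fin M → Fin D2.n} {w : Fin D1.n} {v : Fin D2.n}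
    (h : tauF M D1 σ1 w = tauF M D2 σ2 v) :
    (∀ a, (D1.rel w (σ1 a) ↔ D2.rel v (σ2 a)) ∧ (D1.rel (σ1 a) w ↔ D2.rel (σ2 a) v)) ∧
      (D1.rel w w ↔ D2.rel v v) := by
  have h1 := congrArg Prod.fst h
  have h2 := congrArg Prod.snd h
  simp only [tauF] at h1 h2
  refine ⟨fun a => ?_, db_iff.mp h2⟩
  have ha := congrFun h1 a
  exact ⟨db_iff.mp (congrArg Prod.fst ha), db_iff.mp (congrArg Prod.snd ha)⟩

lemma main_lemma {M : ℕ} (hM : 0 < M) (D1 D2 : FinBinRel)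
    (σ1 : Fin M → Fin D1.n) (σ2 : Fin M → Fin D2.n)
    (good1 : ∀ x y, D1.rel x y → x ≠ y → (∃ a, σ1 a = x) ∨ (∃ a, σ1 a = y))
    (good2 : ∀ x y, D2.rel x y → x ≠ y → (∃ a, σ2 a = x) ∨ (∃ a, σ2 a = y))
    (heq : ∀ a b, σ1 a = σ1 b ↔ σ2 a = σ2 b)
    (hrel : ∀ a b, D1.rel (σ1 a) (σ1 b) ↔ D2.rel (σ2 a) (σ2 b))
    (hcnt : ∀ t, cnt M D1 σ1 t ≤ cnt M D2 σ2 t)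
    (hsupp : ∀ t, cnt M D1 σ1 t = 0 → cnt M D2 σ2 t = 0) :
    StrongLe D1 D2 := by
  classical
  -- family of type-preserving surjections outside the covers
  have hfam : ∀ t : (Fin M → Bool × Bool) × Bool,
      ∃ h : Fin D2.n → Fin D1.n,
        (∀ v, (¬ ∃ a, σ2 a = v) → tauF M D2 σ2 v = t →
          ((¬ ∃ a, σ1 a = h v) ∧ tauF M D1 σ1 (h v) = t)) ∧
        (∀ w, (¬ ∃ a, σ1 a = w) → tauF M D1 σ1 w = t →
          ∃ v, (¬ ∃ a, σ2 a = v) ∧ tauF M D2 σ2 v = t ∧ h v = w) := by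
    intro t
    by_cases hA : Nonempty {w : Fin D1.n // (¬ ∃ a, σ1 a = w) ∧ tauF M D1 σ1 w = t}
    · -- embed the D1-side into the D2-side
      have hc := hcnt t
      haveI := Fintype.ofFinite {w : Fin D1.n // (¬ ∃ a, σ1 a = w) ∧ tauF M D1 σ1 w = t}
      haveI := Fintype.ofFinite {v : Fin D2.n // (¬ ∃ a, σ2 a = v) ∧ tauF M D2 σ2 v = t}
      rw [cnt, cnt, Nat.card_eq_fintype_card, Nat.card_eq_fintype_card] at hc
      obtain ⟨g⟩ := Function.Embedding.nonempty_of_card_le hc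
      set A := {w : Fin D1.n // (¬ ∃ a, σ1 a = w) ∧ tauF M D1 σ1 w = t}
      refine ⟨fun v => if hv : ∃ x : A, (g x : Fin D2.n) = v then (Classical.choose hv : A).val
        else (Classical.choice hA).val, ?_, ?_⟩
      · intro v _ _
        dsimp only
        split
        · next hv => exact (Classical.choose hv).2
        · exact (Classical.choice hA).2
      · intro w hw1 hw2
        refine ⟨(g ⟨w, hw1, hw2⟩ : _).val, (g ⟨w, hw1, hw2⟩).2.1, (g ⟨w, hw1, hw2⟩).2.2, ?_⟩
        have hv : ∃ x : A, (g x : Fin D2.n) = (g ⟨w, hw1, hw2⟩ : _).val := ⟨⟨w, hw1, hw2⟩, rfl⟩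
        dsimp only
        rw [dif_pos hv]
        have := Classical.choose_spec hv
        have : Classical.choose hv = (⟨w, hw1, hw2⟩ : A) :=
          g.injective (Subtype.ext this)
        rw [this]
    · -- D1-side empty, hence D2-side empty
      have h1 : cnt M D1 σ1 t = 0 := by
        rw [cnt, Nat.card_eq_zero]
        exact Or.inl (not_nonempty_iff.mp hA)
      have h2 := hsupp t h1
      refine ⟨fun _ => σ1 ⟨0, hM⟩, ?_, ?_⟩
      · intro v hv1 hv2
        exfalso
        haveI : Nonempty {v : Fin D2.n // (¬ ∃ a, σ2 a = v) ∧ tauF M D2 σ2 v = t} :=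
          ⟨⟨v, hv1, hv2⟩⟩
        have : 0 < cnt M D2 σ2 t := Nat.card_pos
        omega
      · intro w hw1 hw2
        exact absurd ⟨⟨w, hw1, hw2⟩⟩ hA
  choose hh hP1 hP2 using hfam
  -- the surjective strong homomorphism
  set f : Fin D2.n → Fin D1.n := fun v =>
    if hv : ∃ a, σ2 a = v then σ1 (Classical.choose hv) else hh (tauF M D2 σ2 v) v with hfdef
  have F1 : ∀ a, f (σ2 a) = σ1 a := by
    intro a
    have hv : ∃ b, σ2 b = σ2 a := ⟨a, rfl⟩
    rw [hfdef]
    dsimp only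
    rw [dif_pos hv]
    exact (heq _ _).mpr (Classical.choose_spec hv)
  have F2 : ∀ v, (¬ ∃ a, σ2 a = v) →
      (¬ ∃ a, σ1 a = f v) ∧ tauF M D1 σ1 (f v) = tauF M D2 σ2 v := by
    intro v hv
    have : f v = hh (tauF M D2 σ2 v) v := by rw [hfdef]; dsimp only; rw [dif_neg hv]
    rw [this]
    exact hP1 _ v hv rfl
  have F3 : ∀ w, (¬ ∃ a, σ1 a = w) →
      ∃ v, (¬ ∃ a, σ2 a = v) ∧ tauF M D2 σ2 v = tauF M D1 σ1 w ∧ f v = w := by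
    intro w hw
    obtain ⟨v, hv1, hv2, hv3⟩ := hP2 _ w hw rfl
    refine ⟨v, hv1, hv2, ?_⟩
    have : f v = hh (tauF M D2 σ2 v) v := by rw [hfdef]; dsimp only; rw [dif_neg hv1]
    rw [this, hv2, hv3]
  have hsurj : Function.Surjective f := by
    intro w
    by_cases hw : ∃ a, σ1 a = w
    · obtain ⟨a, rfl⟩ := hw
      exact ⟨σ2 a, F1 a⟩
    · obtain ⟨v, _, _, hv3⟩ := F3 w hw
      exact ⟨v, hv3⟩
  have hhom : IsHom D2 D1 f := by
    intro x y hxy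
    by_cases hx : ∃ a, σ2 a = x
    · obtain ⟨a, rfl⟩ := hx
      by_cases hy : ∃ b, σ2 b = y
      · obtain ⟨b, rfl⟩ := hy
        rw [F1 a, F1 b]
        exact (hrel a b).mpr hxy
      · rw [F1 a]
        obtain ⟨_, ht⟩ := F2 y hy
        exact ((tau_eq_props ht).1 a).2.mpr hxy
    · by_cases hy : ∃ b, σ2 b = y
      · obtain ⟨b, rfl⟩ := hy
        rw [F1 b]
        obtain ⟨_, ht⟩ := F2 x hx
        exact ((tau_eq_props ht).1 b).1.mpr hxy
      · by_cases hxy' : x = y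
        · subst hxy'
          obtain ⟨_, ht⟩ := F2 x hx
          exact (tau_eq_props ht).2.mpr hxy
        · rcases good2 x y hxy hxy' with h | h
          · exact absurd h hx
          · exact absurd h hy
  refine ⟨f, hsurj, hhom, ?_⟩
  intro p q hpq _ _
  by_cases hp : ∃ a, σ1 a = p
  · obtain ⟨a, rfl⟩ := hp
    by_cases hq : ∃ b, σ1 b = q
    · obtain ⟨b, rfl⟩ := hq
      exact ⟨σ2 a, σ2 b, (hrel a b).mp hpq, F1 a, F1 b⟩
    · obtain ⟨v, hv1, hv2, hv3⟩ := F3 q hq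
      refine ⟨σ2 a, v, ?_, F1 a, hv3⟩
      exact ((tau_eq_props hv2).1 a).2.mpr hpq
  · by_cases hq : ∃ b, σ1 b = q
    · obtain ⟨b, rfl⟩ := hq
      obtain ⟨v, hv1, hv2, hv3⟩ := F3 p hp
      refine ⟨v, σ2 b, ?_, hv3, F1 b⟩
      exact ((tau_eq_props hv2).1 b).1.mpr hpq
    · by_cases hpq' : p = q
      · subst hpq'
        obtain ⟨v, hv1, hv2, hv3⟩ := F3 p hp
        exact ⟨v, v, (tau_eq_props hv2).2.mpr hpq, hv3, hv3⟩
      · rcases good1 p q hpq hpq' with h | h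
        · exact absurd h hp
        · exact absurd h hq

lemma hasDisjointEdges_zero (D : FinBinRel) : HasDisjointEdges D 0 := by
  refine ⟨Fin.elim0, Fin.elim0, ?_, fun i => i.elim0⟩
  rintro (x | x) _ _ <;> exact x.elim0

lemma cover_lemma (N : ℕ) (D : FinBinRel) (hD : ∀ k, HasDisjointEdges D k → k ≤ N)
    (hn : 0 < D.n) :
    ∃ σ : Fin (2 * N + 1) → Fin D.n,
      ∀ x y, D.rel x y → x ≠ y → (∃ a, σ a = x) ∨ (∃ a, σ a = y) := by
  classical
  have hex : ∃ k, ¬ HasDisjointEdges D (k + 1) := by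
    refine ⟨N, fun h => ?_⟩
    have := hD _ h
    omega
  set k := Nat.find hex with hkdef
  have hk1 : ¬ HasDisjointEdges D (k + 1) := Nat.find_spec hex
  have hk : HasDisjointEdges D k := by
    rcases Nat.eq_zero_or_pos k with h0 | h0
    · rw [h0]; exact hasDisjointEdges_zero D
    · by_contra hc
      have : k ≤ k - 1 := hkdef ▸ Nat.find_min' hex (by
        have : k - 1 + 1 = k := by omega
        rw [this]; exact hc)
      omega
  have hkN : k ≤ N := hD k hk
  obtain ⟨a, b, hinj, hedge⟩ := hk
  refine ⟨fun j => if h1 : (j : ℕ) < k then a ⟨j, h1⟩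
    else if h2 : (j : ℕ) - k < k then b ⟨(j : ℕ) - k, h2⟩ else ⟨0, hn⟩, ?_⟩
  intro x y hxy hne
  by_contra hcon
  push_neg at hcon
  obtain ⟨hcx, hcy⟩ := hcon
  -- extract: a i ≠ x etc.
  have hax : ∀ i, a i ≠ x := by
    intro i
    have := hcx ⟨i, by omega⟩
    simpa [i.isLt] using this
  have hay : ∀ i, a i ≠ y := by
    intro i
    have := hcy ⟨i, by omega⟩
    simpa [i.isLt] using this
  have hbx : ∀ i, b i ≠ x := by
    intro i
    have := hcx ⟨k + i, by omega⟩
    rw [dif_neg (by simp), dif_pos (by simp)] at this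
    intro hb
    apply this
    rw [← hb]
    congr 1
    ext
    simp
  have hby : ∀ i, b i ≠ y := by
    intro i
    have := hcy ⟨k + i, by omega⟩
    rw [dif_neg (by simp), dif_pos (by simp)] at this
    intro hb
    apply this
    rw [← hb]
    congr 1
    ext
    simp
  -- decompose injectivity
  have hainj : Function.Injective a := fun i j h =>
    Sum.inl_injective (@hinj (Sum.inl i) (Sum.inl j) h)
  have hbinj : Function.Injective b := fun i j h =>
    Sum.inr_injective (@hinj (Sum.inr i) (Sum.inr j) h)
  have hab : ∀ i j, a i ≠ b j := fun i j h => by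
    have := @hinj (Sum.inl i) (Sum.inr j) h
    simp at this
  -- build a larger matching
  apply hk1
  refine ⟨Fin.snoc a x, Fin.snoc b y, ?_, ?_⟩
  · have ha' : Function.Injective (Fin.snoc a x : Fin (k+1) → Fin D.n) := by
      intro i j h
      induction i using Fin.lastCases with
      | last =>
        induction j using Fin.lastCases with
        | last => rfl
        | cast j =>
          rw [Fin.snoc_last, Fin.snoc_castSucc] at h
          exact absurd h.symm (hax j)
      | cast i =>
        induction j using Fin.lastCases with
        | last =>
          rw [Fin.snoc_last, Fin.snoc_castSucc] at h
          exact absurd h (hax i)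
        | cast j =>
          rw [Fin.snoc_castSucc, Fin.snoc_castSucc] at h
          exact congrArg Fin.castSucc (hainj h)
    have hb' : Function.Injective (Fin.snoc b y : Fin (k+1) → Fin D.n) := by
      intro i j h
      induction i using Fin.lastCases with
      | last =>
        induction j using Fin.lastCases with
        | last => rfl
        | cast j =>
          rw [Fin.snoc_last, Fin.snoc_castSucc] at h
          exact absurd h.symm (hby j)
      | cast i =>
        induction j using Fin.lastCases with
        | last =>
          rw [Fin.snoc_last, Fin.snoc_castSucc] at h
          exact absurd h (hby i)
        | cast j =>
          rw [Fin.snoc_castSucc, Fin.snoc_castSucc] at h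
          exact congrArg Fin.castSucc (hbinj h)
    refine Function.Injective.sumElim ha' hb' ?_
    intro i j h
    induction i using Fin.lastCases with
    | last =>
      induction j using Fin.lastCases with
      | last => rw [Fin.snoc_last, Fin.snoc_last] at h; exact hne h
      | cast j => rw [Fin.snoc_last, Fin.snoc_castSucc] at h; exact hbx j h.symm
    | cast i =>
      induction j using Fin.lastCases with
      | last => rw [Fin.snoc_last, Fin.snoc_castSucc] at h; exact hay i h
      | cast j => rw [Fin.snoc_castSucc, Fin.snoc_castSucc] at h; exact hab i j h
  · intro i
    induction i using Fin.lastCases with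
    | last => rw [Fin.snoc_last, Fin.snoc_last]; exact hxy
    | cast i => rw [Fin.snoc_castSucc, Fin.snoc_castSucc]; exact hedge i


lemma zero_strongLe {A B : FinBinRel} (hA : A.n = 0) (hB : B.n = 0) : StrongLe A B := by
  refine ⟨fun v => (Fin.cast hB v).elim0, ?_, ?_, ?_⟩
  · intro w; exact (Fin.cast hA w).elim0
  · intro x y _; exact (Fin.cast hB x).elim0
  · intro pp qq _ _ _; exact (Fin.cast hA pp).elim0

lemma key_lemma (N : ℕ) (C : Set FinBinRel)
    (hbound : ∀ D ∈ C, ∀ k, HasDisjointEdges D k → k ≤ N) :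
    ∀ f : ℕ → FinBinRel, (∀ i, f i ∈ C) → ∃ i j, i < j ∧ StrongLe (f i) (f j) := by
  intro f hf
  by_cases hinf : {i | (f i).n = 0}.Infinite
  · obtain ⟨i, hi⟩ := hinf.nonempty
    obtain ⟨j, hj, hij⟩ := hinf.exists_gt i
    exact ⟨i, j, hij, zero_strongLe hi hj⟩
  · have hfin := Set.not_infinite.mp hinf
    have hpos : {i | 0 < (f i).n}.Infinite := by
      have he : {i | 0 < (f i).n} = {i | (f i).n = 0}ᶜ := by
        ext i
        simp [Nat.pos_iff_ne_zero]
      rw [he]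
      exact hfin.infinite_compl
    set p : ℕ → Prop := fun i => 0 < (f i).n with hpdef
    have hpinf : (setOf p).Infinite := hpos
    have hmem : ∀ m, p (Nat.nth p m) := fun m => Nat.nth_mem_of_infinite hpinf m
    have hmono : StrictMono (Nat.nth p) := Nat.nth_strictMono hpinf
    set M := 2 * N + 1 with hMdef
    have hM : 0 < M := by omega
    have hcov : ∀ m, ∃ σ : Fin M → Fin (f (Nat.nth p m)).n,
        ∀ x y, (f (Nat.nth p m)).rel x y → x ≠ y → (∃ a, σ a = x) ∨ (∃ a, σ a = y) :=
      fun m => cover_lemma N _ (hbound _ (hf _)) (hmem m)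
    choose σ hσ using hcov
    set cd : ℕ → (Fin M → Fin M → Bool) × (Fin M → Fin M → Bool) ×
        (((Fin M → Bool × Bool) × Bool) → Bool) :=
      fun m => (fun a b => db (σ m a = σ m b),
                fun a b => db ((f (Nat.nth p m)).rel (σ m a) (σ m b)),
                fun t => db (cnt M (f (Nat.nth p m)) (σ m) t = 0)) with hcd
    obtain ⟨y, hy⟩ := Finite.exists_infinite_fiber cd
    have hyinf : (setOf (· ∈ cd ⁻¹' {y})).Infinite := by
      change (cd ⁻¹' {y}).Infinite
      exact Set.infinite_coe_iff.mp hy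
    set e2 : ℕ → ℕ := Nat.nth (· ∈ cd ⁻¹' {y}) with he2
    have he2mem : ∀ m, cd (e2 m) = y := fun m => Nat.nth_mem_of_infinite hyinf m
    have he2mono : StrictMono e2 := Nat.nth_strictMono hyinf
    have hpwo : (Set.univ : Set (((Fin M → Bool × Bool) × Bool) → ℕ)).IsPWO :=
      Set.isPWO_of_wellQuasiOrderedLE _
    obtain ⟨m, n, hmn, hle⟩ := hpwo.exists_lt
      (f := fun k => cnt M (f (Nat.nth p (e2 k))) (σ (e2 k))) (fun _ => Set.mem_univ _)
    have hcdeq : cd (e2 m) = cd (e2 n) := by rw [he2mem m, he2mem n]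
    have h1 := congrArg Prod.fst hcdeq
    have h2 := congrArg (fun z => z.2.1) hcdeq
    have h3 := congrArg (fun z => z.2.2) hcdeq
    simp only [hcd] at h1 h2 h3
    refine ⟨Nat.nth p (e2 m), Nat.nth p (e2 n), hmono (he2mono hmn), ?_⟩
    refine main_lemma hM _ _ (σ (e2 m)) (σ (e2 n)) (hσ (e2 m)) (hσ (e2 n))
      ?_ ?_ ?_ ?_
    · intro a b
      exact db_iff.mp (congrFun (congrFun h1 a) b)
    · intro a b
      exact db_iff.mp (congrFun (congrFun h2 a) b)
    · intro t
      exact hle t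
    · intro t ht
      exact (db_iff.mp (congrFun h3 t)).mp ht

theorem stmt_4 (N : ℕ) (C : Set FinBinRel)
    (hbound : ∀ D ∈ C, ∀ k, HasDisjointEdges D k → k ≤ N) :
    IsWqo HomLe C ∧ IsWqo StrongLe C := by
  constructor
  · intro f hf
    obtain ⟨i, j, hij, g, hs, hstr⟩ := key_lemma N C hbound f hf
    exact ⟨i, j, hij, g, hs, hstr.1⟩
  · exact key_lemma N C hbound
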